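/- Let (τ_k) be a sequence of positive reals and (N_k) a sequence of natural numbers such that τ_k → 0 and τ_k²·N_k → ∞ as k → ∞. Then |z(τ_k)|^{2N_k} → 0 as k → ∞. -/

import Mathlib

noncomputable def gf (E ε η t : ℝ) : ℂ :=
  Complex.exp (Complex.I * t * (E - ε) / 2)

noncomputable def wf (E ε η t : ℝ) : ℂ :=
  (2 * Complex.I * η / Real.sqrt ((E - ε) ^ 2 + 4 * η ^ 2)) *
    Real.sin (t * Real.sqrt ((E - ε) ^ 2 / 4 + η ^ 2))

noncomputable def zf (E ε η t : ℝ) : ℂ :=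
  (Real.cos (t * Real.sqrt ((E - ε) ^ 2 / 4 + η ^ 2)) : ℂ) +
    (Complex.I * (E - ε) / Real.sqrt ((E - ε) ^ 2 + 4 * η ^ 2)) *
      Real.sin (t * Real.sqrt ((E - ε) ^ 2 / 4 + η ^ 2))

lemma abs_zf_sq (E ε η : ℝ) (hη : 0 < η) (t : ℝ) :
    ‖zf E ε η t‖ ^ 2 =
      1 - (4 * η ^ 2 / ((E - ε) ^ 2 + 4 * η ^ 2)) *
        Real.sin (t * Real.sqrt ((E - ε) ^ 2 / 4 + η ^ 2)) ^ 2 := by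
  set θ := Real.sqrt ((E - ε) ^ 2 / 4 + η ^ 2) with hθ
  have hD : (0:ℝ) < (E - ε) ^ 2 + 4 * η ^ 2 := by positivity
  have hzf : zf E ε η t =
      (Real.cos (t * θ) : ℂ) +
        ((E - ε) / Real.sqrt ((E - ε) ^ 2 + 4 * η ^ 2) * Real.sin (t * θ) : ℝ) * Complex.I := by
    simp only [zf]
    push_cast
    ring
  rw [hzf, Complex.norm_add_mul_I, Real.sq_sqrt (by positivity)]
  rw [div_mul_eq_mul_div, div_pow, mul_pow, Real.sq_sqrt hD.le]
  have hcos : Real.cos (t * θ) ^ 2 = 1 - Real.sin (t * θ) ^ 2 := by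
    have := Real.sin_sq_add_cos_sq (t * θ); linarith
  rw [hcos]
  field_simp
  ring

theorem stmt17 (E ε η : ℝ) (hη : 0 < η) (τ : ℕ → ℝ) (N : ℕ → ℕ)
    (hτpos : ∀ k, 0 < τ k)
    (hτ0 : Filter.Tendsto τ Filter.atTop (nhds 0))
    (hτ2N : Filter.Tendsto (fun k => τ k ^ 2 * N k) Filter.atTop Filter.atTop) :
    Filter.Tendsto (fun k => ‖zf E ε η (τ k)‖ ^ (2 * N k))
      Filter.atTop (nhds 0) := by
  set θ := Real.sqrt ((E - ε) ^ 2 / 4 + η ^ 2) with hθ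
  have hθpos : 0 < θ := Real.sqrt_pos.mpr (by positivity)
  have hD : (0:ℝ) < (E - ε) ^ 2 + 4 * η ^ 2 := by positivity
  set c : ℝ := 4 * η ^ 2 / ((E - ε) ^ 2 + 4 * η ^ 2) with hc
  have hcpos : 0 < c := by positivity
  have hc1 : c ≤ 1 := by
    rw [hc, div_le_one hD]; nlinarith [sq_nonneg (E - ε)]
  set C : ℝ := c * (9 / 16) * θ ^ 2 with hC
  have hCpos : 0 < C := by positivity
  have hg : Filter.Tendsto (fun k => Real.exp (-(C * (τ k ^ 2 * N k))))
      Filter.atTop (nhds 0) := by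
    refine Real.tendsto_exp_atBot.comp ?_
    exact Filter.tendsto_neg_atBot_iff.mpr (hτ2N.const_mul_atTop hCpos)
  refine squeeze_zero' (Filter.Eventually.of_forall fun k => by positivity) ?_ hg
  have hsmall : ∀ᶠ k in Filter.atTop, τ k * θ ≤ 1 := by
    have := hτ0.eventually (gt_mem_nhds (show (0:ℝ) < 1 / θ by positivity))
    filter_upwards [this] with k hk
    rw [← le_div_iff₀ hθpos]
    exact hk.le
  filter_upwards [hsmall] with k hk
  set x := τ k * θ with hx
  have hxpos : 0 < x := mul_pos (hτpos k) hθpos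
  have hsin : (3/4) * x ≤ Real.sin x := by
    have h := Real.sin_gt_sub_cube hxpos
    nlinarith [pow_le_pow_left₀ hxpos.le hk 3, sq_nonneg x]
  have hsin2 : (9/16) * x ^ 2 ≤ Real.sin x ^ 2 := by
    nlinarith [hsin, mul_pos hxpos (show (0:ℝ) < 3/4 by norm_num)]
  have hsinle1 : Real.sin x ^ 2 ≤ 1 := by
    nlinarith [Real.sin_sq_add_cos_sq x, sq_nonneg (Real.cos x)]
  have habs : ‖zf E ε η (τ k)‖ ^ (2 * N k) =
      (1 - c * Real.sin x ^ 2) ^ N k := by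
    rw [pow_mul, abs_zf_sq E ε η hη]
  rw [habs]
  have h1 : 0 ≤ 1 - c * Real.sin x ^ 2 := by nlinarith
  have h2 : 1 - c * Real.sin x ^ 2 ≤ Real.exp (-(c * Real.sin x ^ 2)) := by
    have := Real.add_one_le_exp (-(c * Real.sin x ^ 2)); linarith
  calc (1 - c * Real.sin x ^ 2) ^ N k
      ≤ Real.exp (-(c * Real.sin x ^ 2)) ^ N k := pow_le_pow_left₀ h1 h2 _
    _ = Real.exp (-(c * Real.sin x ^ 2) * N k) := by
        rw [← Real.exp_nat_mul]; ring_nf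
    _ ≤ Real.exp (-(C * (τ k ^ 2 * N k))) := by
        apply Real.exp_le_exp.mpr
        have hN : (0:ℝ) ≤ (N k : ℝ) := Nat.cast_nonneg _
        have : C * τ k ^ 2 = c * ((9/16) * x ^ 2) := by rw [hC, hx]; ring
        nlinarith [mul_le_mul_of_nonneg_right hsin2 hN, hcpos.le]
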